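/- Let G be a finite group satisfying G = P ⋊ F, where P is a normal cyclic p-group for some prime p, F is a nontrivial complement of P with |F| coprime to p, and let Z = C_F(P) be the centralizer of P in F. Then ψ(G) = ψ(P)·ψ(Z) + |P|·(∑_{x ∈ F \ Z} o(x)), and in particular ψ(G) < ψ(P)·ψ(Z) + |P|·ψ(F). -/

import Mathlib

/-- `psi G` is the sum of the orders of all elements of the finite group `G`. -/
noncomputable def psi (G : Type*) [Group G] [Fintype G] : ℕ := ∑ x : G, orderOf x

/-- `psiSet s` is the sum of the orders of the elements of the subset `s` of the
finite group `G`. -/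
noncomputable def psiSet {G : Type*} [Group G] [Fintype G] (s : Set G) : ℕ :=
  ∑ x ∈ s.toFinite.toFinset, orderOf x


lemma key_arith (p k n : ℕ) (hp : p.Prime) (u : ℤ) (hn : n.Coprime p)
    (hun : ((p:ℤ)^k) ∣ u^n - 1) (hu1 : ¬ ((p:ℤ)^k) ∣ (u - 1)) :
    ((p:ℤ)^k) ∣ ∑ i ∈ Finset.range n, u^i := by
  have hgeom : (∑ i ∈ Finset.range n, u^i) * (u - 1) = u^n - 1 := geom_sum_mul u n
  by_cases hpd : (p:ℤ) ∣ (u - 1)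
  · exfalso
    apply hu1
    have hk : k ≠ 0 := by
      rintro rfl; exact hu1 (by simpa using (dvd_refl (1:ℤ)).trans (one_dvd _))
    have hn0 : n ≠ 0 := by
      rintro rfl
      exact hp.one_lt.ne' (Nat.coprime_zero_left p |>.mp hn)
    set m : ℕ := p ^ k with hm
    have hmc : ((m:ℕ):ℤ) = (p:ℤ)^k := by push_cast [hm]; ring
    have hm1 : 1 < m := Nat.one_lt_pow hk hp.one_lt
    haveI : NeZero m := ⟨by omega⟩
    haveI : Fact p.Prime := ⟨hp⟩
    set v : ZMod m := (u : ZMod m) with hv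
    have hvn : v ^ n = 1 := by
      have := (ZMod.intCast_zmod_eq_zero_iff_dvd (u^n - 1) m).mpr (by rw [hmc]; exact hun)
      push_cast at this
      rw [sub_eq_zero] at this
      exact this
    have hvu : IsUnit v := by
      refine IsUnit.of_mul_eq_one (a := v) (v^(n-1)) ?_
      rw [← pow_succ', Nat.sub_add_cancel (Nat.pos_of_ne_zero hn0)]
      exact hvn
    obtain ⟨V, hV⟩ := hvu
    have hVn : V ^ n = 1 := by ext; push_cast [hV]; exact hvn
    have hdvd_pm : p ∣ m := dvd_pow_self p hk
    have hVker : V ∈ (ZMod.unitsMap hdvd_pm).ker := by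
      rw [MonoidHom.mem_ker]
      ext
      rw [ZMod.unitsMap_def]
      simp only [Units.coe_map, Units.val_one, MonoidHom.coe_coe]
      rw [hV, hv, map_intCast]
      have : ((u - 1 : ℤ) : ZMod p) = 0 := (ZMod.intCast_zmod_eq_zero_iff_dvd _ p).mpr hpd
      push_cast at this
      rw [sub_eq_zero] at this
      exact this
    have hcard : Nat.card (ZMod.unitsMap hdvd_pm).ker = p ^ (k - 1) := by
      have hsurj := ZMod.unitsMap_surjective (m := m) hdvd_pm
      have h1 : Nat.card (ZMod m)ˣ = Nat.card ((ZMod m)ˣ ⧸ (ZMod.unitsMap hdvd_pm).ker) *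
          Nat.card (ZMod.unitsMap hdvd_pm).ker :=
        Subgroup.card_eq_card_quotient_mul_card_subgroup _
      have h2 : Nat.card ((ZMod m)ˣ ⧸ (ZMod.unitsMap hdvd_pm).ker) = Nat.card (ZMod p)ˣ :=
        Nat.card_congr (QuotientGroup.quotientKerEquivOfSurjective _ hsurj).toEquiv
      have h3 : Nat.card (ZMod m)ˣ = p ^ (k-1) * (p - 1) := by
        rw [Nat.card_eq_fintype_card, ZMod.card_units_eq_totient, hm,
          Nat.totient_prime_pow hp (Nat.pos_of_ne_zero hk)]
      have h4 : Nat.card (ZMod p)ˣ = p - 1 := by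
        rw [Nat.card_eq_fintype_card, ZMod.card_units_eq_totient, Nat.totient_prime hp]
      rw [h2, h3, h4] at h1
      have hp1 : 0 < p - 1 := by have := hp.one_lt; omega
      rw [mul_comm (p-1)] at h1
      exact (Nat.eq_of_mul_eq_mul_right hp1 (by linarith)).symm
    have hdvd1 : orderOf V ∣ n := orderOf_dvd_of_pow_eq_one hVn
    have hdvd2 : orderOf V ∣ p ^ (k-1) := by
      rw [← hcard]
      exact Subgroup.orderOf_dvd_natCard _ hVker
    have : orderOf V = 1 :=
      Nat.eq_one_of_dvd_coprimes (hn.pow_right _) hdvd1 hdvd2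
    have hV1 : V = 1 := orderOf_eq_one_iff.mp this
    have hv1 : v = 1 := by rw [← hV, hV1, Units.val_one]
    have : ((u - 1 : ℤ) : ZMod m) = 0 := by push_cast; rw [sub_eq_zero]; exact hv1
    have := (ZMod.intCast_zmod_eq_zero_iff_dvd _ m).mp this
    rwa [hmc] at this
  · have hcop : IsCoprime ((p:ℤ)^k) (u - 1) :=
      ((Nat.prime_iff_prime_int.mp hp).coprime_iff_not_dvd.mpr hpd).pow_left
    rw [← hgeom] at hun
    exact hcop.dvd_of_dvd_mul_right hun

lemma orderOf_mul_notcent {G : Type*} [Group G] [Fintype G] (p : ℕ) (hp : p.Prime)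
    (P : Subgroup G) (hPnormal : P.Normal) (g : G) (hgP : g ∈ P)
    (hg : ∀ b ∈ P, ∃ j : ℕ, g ^ j = b) (k : ℕ) (hord : orderOf g = p ^ k)
    (a x : G) (ha : a ∈ P) (hx1 : x ∉ Subgroup.centralizer (P : Set G))
    (hxp : Nat.Coprime (orderOf x) p) (hxP : ∀ t : ℕ, x ^ t ∈ P → x ^ t = 1) :
    orderOf (a * x) = orderOf x := by
  obtain ⟨u, hu⟩ := hg (x * g * x⁻¹) (hPnormal.conj_mem g hgP x)
  have hconj : ∀ t : ℕ, x * g ^ t * x⁻¹ = g ^ (t * u) := by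
    intro t
    calc x * g ^ t * x⁻¹ = (x * g * x⁻¹) ^ t := (conj_pow).symm
    _ = (g ^ u) ^ t := by rw [hu]
    _ = g ^ (t * u) := by rw [← pow_mul, mul_comm]
  set n := orderOf x with hn
  have hitern : ∀ i : ℕ, x ^ i * g * (x ^ i)⁻¹ = g ^ (u ^ i) := by
    intro i
    induction i with
    | zero => simp
    | succ i ih =>
      have : x ^ (i+1) * g * (x ^ (i+1))⁻¹ = x * (x ^ i * g * (x ^ i)⁻¹) * x⁻¹ := by
        rw [pow_succ']
        group
      rw [this, ih, hconj, pow_succ]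
  have hun : g ^ (u ^ n) = g := by
    have := hitern n
    rw [pow_orderOf_eq_one x] at this
    simpa using this.symm
  have hmod : u ^ n ≡ 1 [MOD p ^ k] := by
    rw [← hord]
    have : g ^ (u ^ n) = g ^ 1 := by simpa using hun
    exact pow_eq_pow_iff_modEq.mp this
  have hdvdZ : ((p:ℤ)^k) ∣ (u:ℤ)^n - 1 := by
    have := (Nat.modEq_iff_dvd).mp hmod
    push_cast at this
    exact dvd_sub_comm.mp this
  have hu1 : ¬ ((p:ℤ)^k) ∣ ((u:ℤ) - 1) := by
    intro hd
    apply hx1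
    rw [Subgroup.mem_centralizer_iff]
    intro b hb
    obtain ⟨t, rfl⟩ := hg b hb
    have hmod2 : t * u ≡ t * 1 [MOD p ^ k] := by
      refine Nat.ModEq.mul_left t ?_
      rw [Nat.modEq_iff_dvd]
      push_cast
      exact dvd_sub_comm.mp hd
    have : g ^ (t * u) = g ^ t := by
      rw [mul_one] at hmod2
      exact pow_eq_pow_iff_modEq.mpr (by rw [hord]; exact hmod2)
    have h3 : x * g ^ t * x⁻¹ = g ^ t := by rw [hconj t, this]
    calc g ^ t * x = (x * g ^ t * x⁻¹) * x := by rw [h3]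
    _ = x * g ^ t := by group
  have hnp : ((p:ℤ)^k) ∣ ((∑ i ∈ Finset.range n, u ^ i : ℕ) : ℤ) := by
    push_cast
    exact key_arith p k n hp u hxp hdvdZ hu1
  have hS : (p ^ k : ℕ) ∣ ∑ i ∈ Finset.range n, u ^ i := by exact_mod_cast hnp
  have hdecomp : ∀ (j N : ℕ), (g ^ j * x) ^ N = g ^ (j * ∑ i ∈ Finset.range N, u ^ i) * x ^ N := by
    intro j N
    induction N with
    | zero => simp
    | succ N ih =>
      rw [pow_succ' (g ^ j * x), ih, geom_sum_succ]
      have : x * (g ^ (j * ∑ i ∈ Finset.range N, u ^ i) * x ^ N)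
          = g ^ ((j * ∑ i ∈ Finset.range N, u ^ i) * u) * x ^ (N + 1) := by
        have h4 := hconj (j * ∑ i ∈ Finset.range N, u ^ i)
        calc x * (g ^ (j * ∑ i ∈ Finset.range N, u ^ i) * x ^ N)
            = (x * g ^ (j * ∑ i ∈ Finset.range N, u ^ i) * x⁻¹) * x ^ (N+1) := by
              simp [pow_succ', mul_assoc]
        _ = g ^ ((j * ∑ i ∈ Finset.range N, u ^ i) * u) * x ^ (N + 1) := by rw [h4]
      rw [mul_assoc, this, ← mul_assoc, ← pow_add]
      congr 2
      ring
  obtain ⟨j, hj⟩ := hg a ha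
  have h1 : (a * x) ^ n = 1 := by
    rw [← hj, hdecomp, pow_orderOf_eq_one x, mul_one]
    apply orderOf_dvd_iff_pow_eq_one.mp
    rw [hord]
    exact hS.mul_left j
  have hd1 : orderOf (a * x) ∣ n := orderOf_dvd_of_pow_eq_one h1
  have hd2 : n ∣ orderOf (a * x) := by
    set N := orderOf (a * x) with hN
    have h2 : (a * x) ^ N = 1 := pow_orderOf_eq_one _
    rw [← hj, hdecomp] at h2
    have hxN : x ^ N ∈ P := by
      rw [eq_inv_of_mul_eq_one_right h2]
      exact inv_mem (pow_mem hgP _)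
    exact orderOf_dvd_of_pow_eq_one (hxP N hxN)
  exact Nat.dvd_antisymm hd1 hd2

lemma sum_set_coe' {G : Type*} [Fintype G] (s : Set G) (f : G → ℕ) [DecidablePred (· ∈ s)] :
    (∑ x : s, f ↑x) = ∑ x ∈ Finset.univ.filter (· ∈ s), f x :=
  (Finset.sum_subtype _ (fun x => by simp) f).symm

lemma psiSet_eq_filter {G : Type*} [Group G] [Fintype G] (s : Set G) [DecidablePred (· ∈ s)] :
    psiSet s = ∑ x ∈ Finset.univ.filter (· ∈ s), orderOf x := by
  apply Finset.sum_congr _ (fun _ _ => rfl)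
  ext x
  simp [Set.Finite.mem_toFinset]

theorem psi_semidirect_formula {G : Type*} [Group G] [Fintype G] (p : ℕ)
    (hp : p.Prime) (P : Subgroup G) (hPnormal : P.Normal) (hPcyc : IsCyclic P)
    (hPp : IsPGroup p P) (F : Subgroup G) (hcompl : P.IsComplement' F)
    (hF : F ≠ ⊥) (hcop : Nat.Coprime (Nat.card F) p) :
    psi G = psiSet (P : Set G) *
        psiSet ((F ⊓ Subgroup.centralizer (P : Set G) : Subgroup G) : Set G) +
        Nat.card P *
          psiSet ((F : Set G) \
            ((F ⊓ Subgroup.centralizer (P : Set G) : Subgroup G) : Set G)) ∧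
    psi G < psiSet (P : Set G) *
        psiSet ((F ⊓ Subgroup.centralizer (P : Set G) : Subgroup G) : Set G) +
        Nat.card P * psiSet (F : Set G) := by
  classical
  haveI : Fact p.Prime := ⟨hp⟩
  set Z : Subgroup G := F ⊓ Subgroup.centralizer (P : Set G) with hZ
  -- generator of P
  obtain ⟨g0, hg0⟩ := hPcyc.exists_generator
  set g : G := (g0 : G) with hgdef
  have hgP : g ∈ P := g0.2
  have hg : ∀ b ∈ P, ∃ j : ℕ, g ^ j = b := by
    intro b hb
    have h1 := hg0 ⟨b, hb⟩
    rw [← mem_powers_iff_mem_zpowers] at h1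
    obtain ⟨j, hj⟩ := h1
    exact ⟨j, by simpa [hgdef] using congrArg (Subtype.val) hj⟩
  obtain ⟨k, hk⟩ := hPp.exists_card_eq
  have hordg : orderOf g = p ^ k := by
    rw [hgdef, Subgroup.orderOf_coe, orderOf_eq_card_of_forall_mem_zpowers hg0]
    exact hk
  -- order of elements coprime facts
  have hcoprime : ∀ x : G, x ∈ F → (orderOf x).Coprime p := fun x hx =>
    Nat.Coprime.coprime_dvd_left (Subgroup.orderOf_dvd_natCard F hx) hcop
  -- key order computations
  have hordA : ∀ a x : G, a ∈ P → x ∈ F → x ∈ Subgroup.centralizer (P : Set G) →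
      orderOf (a * x) = orderOf a * orderOf x := by
    intro a x ha hx hxc
    have hcomm : Commute a x := (Subgroup.mem_centralizer_iff.mp hxc) a ha
    refine Commute.orderOf_mul_eq_mul_orderOf_of_coprime hcomm ?_
    have c2 : (orderOf x).Coprime (p ^ k) := (hcoprime x hx).pow_right _
    exact (c2.coprime_dvd_right (hk ▸ Subgroup.orderOf_dvd_natCard P ha)).symm
  have hordB : ∀ a x : G, a ∈ P → x ∈ F → x ∉ Subgroup.centralizer (P : Set G) →
      orderOf (a * x) = orderOf x := by
    intro a x ha hx hxc
    refine orderOf_mul_notcent p hp P hPnormal g hgP hg k hordg a x ha hxc (hcoprime x hx) ?_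
    intro t ht
    have h2 : x ^ t ∈ F := pow_mem hx t
    exact Subgroup.disjoint_def.mp hcompl.disjoint ht h2
  -- decompose the sum
  have hsum : psi G = ∑ pr : (↥(P : Set G) × ↥(F : Set G)),
      orderOf ((pr.1 : G) * (pr.2 : G)) := by
    rw [psi, ← Equiv.sum_comp (Subgroup.IsComplement.equiv hcompl).symm orderOf]
    exact Finset.sum_congr rfl fun pr _ => by rw [hcompl.equiv_symm_apply]
  rw [Fintype.sum_prod_type] at hsum
  -- inner sum
  have hinner : ∀ a : ↥(P : Set G), ∑ x : ↥(F : Set G), orderOf ((a : G) * (x : G)) =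
      orderOf (a : G) * psiSet (Z : Set G) + psiSet ((F : Set G) \ (Z : Set G)) := by
    intro a
    have ha : (a : G) ∈ P := a.2
    have step : ∀ x : ↥(F : Set G), orderOf ((a : G) * (x : G)) =
        if (x : G) ∈ Subgroup.centralizer (P : Set G) then orderOf (a : G) * orderOf (x : G)
        else orderOf (x : G) := by
      intro x
      by_cases hc : (x : G) ∈ Subgroup.centralizer (P : Set G)
      · rw [if_pos hc]; exact hordA _ _ ha x.2 hc
      · rw [if_neg hc]; exact hordB _ _ ha x.2 hc
    calc ∑ x : ↥(F : Set G), orderOf ((a : G) * (x : G))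
        = ∑ x : ↥(F : Set G), (if (x : G) ∈ Subgroup.centralizer (P : Set G)
            then orderOf (a : G) * orderOf (x : G) else orderOf (x : G)) :=
          Finset.sum_congr rfl fun x _ => step x
      _ = ∑ x ∈ Finset.univ.filter (· ∈ (F : Set G)),
            (if x ∈ Subgroup.centralizer (P : Set G)
            then orderOf (a : G) * orderOf x else orderOf x) := by
          exact sum_set_coe' (F : Set G) (fun x => if x ∈ Subgroup.centralizer (P : Set G)
              then orderOf (a : G) * orderOf x else orderOf x)
      _ = (∑ x ∈ (Finset.univ.filter (· ∈ (F : Set G))).filter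
              (· ∈ Subgroup.centralizer (P : Set G)), orderOf (a : G) * orderOf x) +
          ∑ x ∈ (Finset.univ.filter (· ∈ (F : Set G))).filter
              (¬ · ∈ Subgroup.centralizer (P : Set G)), orderOf x := Finset.sum_ite _ _
      _ = orderOf (a : G) * psiSet (Z : Set G) + psiSet ((F : Set G) \ (Z : Set G)) := by
          rw [psiSet_eq_filter, psiSet_eq_filter, Finset.mul_sum]
          congr 1
          · apply Finset.sum_congr _ (fun _ _ => rfl)
            ext x
            simp [hZ, Subgroup.mem_inf, and_comm]
          · apply Finset.sum_congr _ (fun _ _ => rfl)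
            ext x
            simp only [Finset.mem_filter, Finset.mem_univ, true_and, Set.mem_diff,
              SetLike.mem_coe, hZ, Subgroup.mem_inf]
            tauto
  have hPsum : ∑ a : ↥(P : Set G), orderOf (a : G) = psiSet (P : Set G) := by
    rw [psiSet_eq_filter]
    exact sum_set_coe' (P : Set G) orderOf
  have hcardP : Fintype.card ↥(P : Set G) = Nat.card P := by
    rw [← Nat.card_eq_fintype_card]
    exact Nat.card_congr (Equiv.setCongr rfl)
  have hmain : psi G = psiSet (P : Set G) * psiSet (Z : Set G) +
      Nat.card P * psiSet ((F : Set G) \ (Z : Set G)) := by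
    rw [hsum]
    calc ∑ a : ↥(P : Set G), ∑ x : ↥(F : Set G), orderOf ((a : G) * (x : G))
        = ∑ a : ↥(P : Set G), (orderOf (a : G) * psiSet (Z : Set G) +
            psiSet ((F : Set G) \ (Z : Set G))) :=
          Finset.sum_congr rfl fun a _ => hinner a
      _ = (∑ a : ↥(P : Set G), orderOf (a : G)) * psiSet (Z : Set G) +
            Fintype.card ↥(P : Set G) * psiSet ((F : Set G) \ (Z : Set G)) := by
          rw [Finset.sum_add_distrib, ← Finset.sum_mul, Finset.sum_const, Finset.card_univ,
            smul_eq_mul]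
      _ = psiSet (P : Set G) * psiSet (Z : Set G) +
            Nat.card P * psiSet ((F : Set G) \ (Z : Set G)) := by rw [hPsum, hcardP]
  refine ⟨hmain, ?_⟩
  -- split psiSet F
  have hFsplit : psiSet (F : Set G) = psiSet (Z : Set G) + psiSet ((F : Set G) \ (Z : Set G)) := by
    rw [psiSet_eq_filter, psiSet_eq_filter, psiSet_eq_filter,
      ← Finset.sum_filter_add_sum_filter_not (Finset.univ.filter (· ∈ (F : Set G)))
        (· ∈ Subgroup.centralizer (P : Set G)) orderOf]
    congr 1
    · apply Finset.sum_congr _ (fun _ _ => rfl)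
      ext x
      simp [hZ, Subgroup.mem_inf, and_comm]
    · apply Finset.sum_congr _ (fun _ _ => rfl)
      ext x
      simp only [Finset.mem_filter, Finset.mem_univ, true_and, Set.mem_diff,
        SetLike.mem_coe, hZ, Subgroup.mem_inf]
      tauto
  have hZpos : 1 ≤ psiSet (Z : Set G) := by
    rw [psiSet]
    have h1 : (1 : G) ∈ (Z : Set G).toFinite.toFinset := by
      rw [Set.Finite.mem_toFinset]
      exact Subgroup.one_mem Z
    calc 1 = orderOf (1 : G) := orderOf_one.symm
      _ ≤ _ := Finset.single_le_sum (fun _ _ => Nat.zero_le _) h1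
  have hPpos : 0 < Nat.card P := Nat.card_pos
  rw [hmain, hFsplit]
  have : 0 < Nat.card P * psiSet (Z : Set G) := Nat.mul_pos hPpos hZpos
  nlinarith [this]
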